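/- Fix 0 < δ ≪ 1, μ = 1−2δ. There exists J_δ > 0 such that: for all j ∈ ℤ² with |j| > J_δ and |b(j)| < 2|j|^μ, if h ∈ ℤ² satisfies |j−h| < 2·max(|j|,|h|)^δ and v(h) ≠ v(j), then |v(j)| > (1/2)|j|^δ. -/

import Mathlib

set_option maxHeartbeats 1000000


noncomputable def enorm2 (v : ℤ × ℤ) : ℝ := Real.sqrt ((v.1 : ℝ)^2 + (v.2 : ℝ)^2)

def zdot (x v : ℤ × ℤ) : ℤ := x.1 * v.1 + x.2 * v.2

def IsGenerator (v : ℤ × ℤ) : Prop := (Int.gcd v.1 v.2 = 1 ∧ 0 < v.1) ∨ v = (0, 1)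

def IsMinimizer (δ : ℝ) (j v : ℤ × ℤ) : Prop :=
  IsGenerator v ∧ enorm2 v ≤ enorm2 j ^ δ ∧
    ∀ w : ℤ × ℤ, IsGenerator w → enorm2 w ≤ enorm2 j ^ δ → |zdot j v| ≤ |zdot j w|

noncomputable def cz (v : ℤ × ℤ) : ℂ := ⟨(v.1:ℝ), (v.2:ℝ)⟩

lemma enorm2_eq (v : ℤ × ℤ) : enorm2 v = ‖cz v‖ := by
  rw [Complex.norm_def, Complex.normSq_apply, enorm2]
  simp [cz]
  ring_nf

lemma cz_sub (a b : ℤ × ℤ) : cz (a - b) = cz a - cz b := by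
  apply Complex.ext <;> simp [cz]

lemma zdot_re (x v : ℤ × ℤ) : (zdot x v : ℝ) = (cz x * (starRingEnd ℂ) (cz v)).re := by
  simp [cz, zdot, Complex.mul_re]

lemma abs_zdot_le (x v : ℤ × ℤ) : |(zdot x v : ℝ)| ≤ enorm2 x * enorm2 v := by
  rw [zdot_re, enorm2_eq, enorm2_eq]
  calc |(cz x * (starRingEnd ℂ) (cz v)).re| ≤ ‖cz x * (starRingEnd ℂ) (cz v)‖ :=
        Complex.abs_re_le_norm _
    _ = ‖cz x‖ * ‖cz v‖ := by rw [norm_mul, Complex.norm_conj]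

lemma enorm2_nonneg (v : ℤ × ℤ) : 0 ≤ enorm2 v := Real.sqrt_nonneg _

lemma one_le_enorm2 {v : ℤ × ℤ} (hv : v ≠ 0) : 1 ≤ enorm2 v := by
  have h1 : (1:ℤ) ≤ v.1^2 + v.2^2 := by
    rcases (em (v.1 = 0)) with h | h
    · have h2 : v.2 ≠ 0 := fun h2 => hv (Prod.ext h h2)
      nlinarith [Int.one_le_abs h2, sq_nonneg v.1, abs_nonneg v.2, sq_abs v.2]
    · nlinarith [Int.one_le_abs h, sq_nonneg v.2, abs_nonneg v.1, sq_abs v.1]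
  have h1' : (1:ℝ) ≤ (v.1:ℝ)^2 + (v.2:ℝ)^2 := by exact_mod_cast h1
  rw [enorm2]
  nlinarith [Real.sq_sqrt (by positivity : (0:ℝ) ≤ (v.1:ℝ)^2 + (v.2:ℝ)^2),
    Real.sqrt_nonneg ((v.1:ℝ)^2 + (v.2:ℝ)^2)]

lemma enorm2_tri (a b : ℤ × ℤ) : enorm2 a ≤ enorm2 b + enorm2 (b - a) := by
  rw [enorm2_eq, enorm2_eq, enorm2_eq, cz_sub]
  have he : cz b + (cz a - cz b) = cz a := by ring
  calc ‖cz a‖ = ‖cz b + (cz a - cz b)‖ := by rw [he]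
    _ ≤ ‖cz b‖ + ‖cz a - cz b‖ := norm_add_le _ _
    _ = ‖cz b‖ + ‖cz b - cz a‖ := by rw [norm_sub_rev]

lemma det_ne_zero {v w : ℤ × ℤ} (hv : IsGenerator v) (hw : IsGenerator w) (hne : v ≠ w) :
    v.1 * w.2 - v.2 * w.1 ≠ 0 := by
  intro hd
  have hd' : v.1 * w.2 = v.2 * w.1 := by linarith
  rcases hv with ⟨hg, hp⟩ | rfl
  · rcases hw with ⟨hg', hp'⟩ | rfl
    · have hco : IsCoprime v.1 v.2 := Int.isCoprime_iff_gcd_eq_one.mpr hg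
      have hco' : IsCoprime w.1 w.2 := Int.isCoprime_iff_gcd_eq_one.mpr hg'
      have h1 : v.1 ∣ w.1 := hco.dvd_of_dvd_mul_left ⟨w.2, by linarith⟩
      have h2 : w.1 ∣ v.1 := hco'.dvd_of_dvd_mul_left ⟨v.2, by linarith⟩
      have he : v.1 = w.1 := Int.dvd_antisymm (le_of_lt hp) (le_of_lt hp') h1 h2
      have he2 : v.2 = w.2 := by
        have h3 : v.1 * w.2 = v.1 * v.2 := by rw [hd', he]; ring
        have := mul_left_cancel₀ (ne_of_gt hp) h3
        omega
      exact hne (Prod.ext he he2)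
    · simp at hd'; omega
  · rcases hw with ⟨hg', hp'⟩ | rfl
    · simp at hd'; omega
    · exact hne rfl

lemma rpow_small {x δ : ℝ} (hx : 256 ≤ x) (hδ0 : 0 < δ) (hδ : δ < 1/4) : 2 * x ^ δ ≤ x / 2 := by
  have hx1 : (1:ℝ) ≤ x := by linarith
  have h1 : x ^ δ ≤ x ^ (1/4 : ℝ) := Real.rpow_le_rpow_of_exponent_le hx1 (le_of_lt hδ)
  have h2 : (256:ℝ) ^ (3/4 : ℝ) ≤ x ^ (3/4 : ℝ) :=
    Real.rpow_le_rpow (by norm_num) hx (by norm_num)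
  have h3 : (256:ℝ) ^ (3/4 : ℝ) = 64 := by
    rw [show (256:ℝ) = 2 ^ (8:ℕ) by norm_num, ← Real.rpow_natCast 2 8,
      ← Real.rpow_mul (by norm_num)]
    norm_num
  have h4 : x ^ (1/4 : ℝ) * x ^ (3/4 : ℝ) = x := by
    rw [← Real.rpow_add (by linarith)]
    norm_num
  nlinarith [Real.rpow_nonneg (show (0:ℝ) ≤ x by linarith) (1/4 : ℝ)]


/-- If `|j| > J_δ`, `|b(j)| < 2|j|^μ`, `|j − h| < 2 max(|j|,|h|)^δ` and
`v(h) ≠ v(j)`, then `|v(j)| > |j|^δ / 2`. -/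
theorem stmt3 (δ μ : ℝ) (hδ : 0 < δ) (hδ' : δ < 1/4) (hμ : μ = 1 - 2*δ) :
    ∃ Jδ : ℝ, 0 < Jδ ∧ ∀ j h vj vh : ℤ × ℤ, j ≠ 0 → h ≠ 0 → Jδ < enorm2 j →
      IsMinimizer δ j vj → IsMinimizer δ h vh →
      (|zdot j vj| : ℝ) < 2 * enorm2 j ^ μ →
      enorm2 (j - h) < 2 * (max (enorm2 j) (enorm2 h)) ^ δ →
      vh ≠ vj →
      (1/2) * enorm2 j ^ δ < enorm2 vj := by
  refine ⟨2 * 256 ^ (1/δ), by positivity, ?_⟩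
  intro j h vj vh hj0 hh0 hJ hmj hmh hb hjh hne
  by_contra hcon
  push_neg at hcon
  set N := enorm2 j with hNdef
  set H := enorm2 h with hHdef
  have hN1 : 1 ≤ N := one_le_enorm2 hj0
  have hH1 : 1 ≤ H := one_le_enorm2 hh0
  have hNpos : (0:ℝ) < N := by linarith
  have hHpos : (0:ℝ) < H := by linarith
  have hδ1 : (1:ℝ) ≤ 1/δ := by
    rw [le_div_iff₀ hδ]; linarith
  have hr256 : (256:ℝ) ≤ 256 ^ (1/δ) := by
    nth_rewrite 1 [show (256:ℝ) = 256 ^ (1:ℝ) by norm_num]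
    exact Real.rpow_le_rpow_of_exponent_le (by norm_num) hδ1
  have hN256 : (256:ℝ) ≤ N := by linarith
  -- Step A : comparison of N and H
  have htri1 : H ≤ N + enorm2 (j - h) := enorm2_tri h j
  have htri2 : N ≤ H + enorm2 (j - h) := by
    have := enorm2_tri j h
    have hflip : enorm2 (h - j) = enorm2 (j - h) := by
      rw [enorm2_eq, enorm2_eq, cz_sub, cz_sub, norm_sub_rev]
    linarith [this, hflip.symm.le]
  have hH2N : H ≤ 2 * N ∧ N ≤ 2 * H := by
    rcases le_total H N with hc | hc
    · have hmax : max N H = N := max_eq_left hc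
      rw [hmax] at hjh
      have hs : 2 * N ^ δ ≤ N / 2 := rpow_small hN256 hδ hδ'
      constructor
      · linarith
      · linarith
    · have hmax : max N H = H := max_eq_right hc
      rw [hmax] at hjh
      have hH256 : (256:ℝ) ≤ H := by linarith
      have hs : 2 * H ^ δ ≤ H / 2 := rpow_small hH256 hδ hδ'
      constructor
      · linarith
      · linarith
  obtain ⟨h2N, hN2H⟩ := hH2N
  -- basic rpow facts
  have hNδpos : (0:ℝ) < N ^ δ := Real.rpow_pos_of_pos hNpos δ
  have hHδpos : (0:ℝ) < H ^ δ := Real.rpow_pos_of_pos hHpos δ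
  have hμpos : (0:ℝ) < μ := by rw [hμ]; linarith
  have h2δ : ∀ x : ℝ, 0 < x → (2 * x) ^ δ ≤ 2 * x ^ δ := by
    intro x hx
    rw [Real.mul_rpow (by norm_num) (le_of_lt hx)]
    have : (2:ℝ) ^ δ ≤ 2 ^ (1:ℝ) := Real.rpow_le_rpow_of_exponent_le (by norm_num) (by linarith)
    rw [Real.rpow_one] at this
    nlinarith [Real.rpow_pos_of_pos hx δ]
  have h2μ : ∀ x : ℝ, 0 < x → (2 * x) ^ μ ≤ 2 * x ^ μ := by
    intro x hx
    rw [Real.mul_rpow (by norm_num) (le_of_lt hx)]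
    have : (2:ℝ) ^ μ ≤ 2 ^ (1:ℝ) := Real.rpow_le_rpow_of_exponent_le (by norm_num) (by rw [hμ]; linarith)
    rw [Real.rpow_one] at this
    nlinarith [Real.rpow_pos_of_pos hx μ]
  -- max ^ δ ≤ 2 N^δ
  have hMδ : (max N H) ^ δ ≤ 2 * N ^ δ := by
    have hm : max N H ≤ 2 * N := by
      rcases max_cases N H with ⟨he, _⟩ | ⟨he, _⟩ <;> rw [he] <;> linarith
    calc (max N H) ^ δ ≤ (2 * N) ^ δ :=
          Real.rpow_le_rpow (le_trans hNpos.le (le_max_left N H)) hm (le_of_lt hδ)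
      _ ≤ 2 * N ^ δ := h2δ N hNpos
  -- Step C : |zdot h vj| ≤ 4 N^μ
  have hsplit : zdot h vj = zdot j vj - zdot (j - h) vj := by
    simp [zdot, Prod.fst_sub, Prod.snd_sub]
    ring
  have hCS : |(zdot (j - h) vj : ℝ)| ≤ enorm2 (j - h) * enorm2 vj := abs_zdot_le (j - h) vj
  have hvjle : enorm2 vj ≤ N ^ δ / 2 := by linarith
  have hN2δμ : N ^ δ * N ^ δ ≤ N ^ μ := by
    rw [← Real.rpow_add hNpos]
    exact Real.rpow_le_rpow_of_exponent_le hN1 (by rw [hμ]; linarith)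
  have hprod : enorm2 (j - h) * enorm2 vj ≤ 2 * N ^ μ := by
    have h1 : enorm2 (j - h) ≤ 4 * N ^ δ := by
      calc enorm2 (j - h) ≤ 2 * (max N H) ^ δ := le_of_lt hjh
        _ ≤ 4 * N ^ δ := by linarith
    calc enorm2 (j - h) * enorm2 vj ≤ (4 * N ^ δ) * (N ^ δ / 2) := by
          apply mul_le_mul h1 hvjle (enorm2_nonneg vj) (by positivity)
      _ = 2 * (N ^ δ * N ^ δ) := by ring
      _ ≤ 2 * N ^ μ := by linarith
  have hA : |(zdot h vj : ℝ)| ≤ 4 * N ^ μ := by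
    have heq : (zdot h vj : ℝ) = (zdot j vj : ℝ) - (zdot (j - h) vj : ℝ) := by
      rw [hsplit]; push_cast; ring
    have hbr : |(zdot j vj : ℝ)| < 2 * N ^ μ := by
      push_cast at hb
      exact hb
    calc |(zdot h vj : ℝ)| ≤ |(zdot j vj : ℝ)| + |(zdot (j - h) vj : ℝ)| := by
          rw [heq]; exact abs_sub _ _
      _ ≤ 4 * N ^ μ := by linarith
  -- Step B : vj is a candidate for h
  have hvjH : enorm2 vj ≤ H ^ δ := by
    have h1 : N ^ δ ≤ (2 * H) ^ δ :=
      Real.rpow_le_rpow (le_of_lt hNpos) hN2H (le_of_lt hδ)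
    have h2 : (2 * H) ^ δ ≤ 2 * H ^ δ := h2δ H hHpos
    linarith
  have hmin : |zdot h vh| ≤ |zdot h vj| := hmh.2.2 vj hmj.1 hvjH
  have hminR : |(zdot h vh : ℝ)| ≤ |(zdot h vj : ℝ)| := by exact_mod_cast hmin
  -- Step D : Cramer
  have hcram : ((vj.1 * vh.2 - vj.2 * vh.1 : ℤ) : ℂ) * cz h =
      (zdot h vj : ℂ) * (-Complex.I * cz vh) + (zdot h vh : ℂ) * (Complex.I * cz vj) := by
    apply Complex.ext <;>
      simp [cz, zdot, Complex.mul_re, Complex.mul_im, Complex.add_re, Complex.add_im] <;>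
      push_cast <;> ring
  set d : ℤ := vj.1 * vh.2 - vj.2 * vh.1 with hddef
  have hd : d ≠ 0 := det_ne_zero hmj.1 hmh.1 (Ne.symm hne)
  have hd1 : (1:ℝ) ≤ |(d:ℝ)| := by
    have := Int.one_le_abs hd
    exact_mod_cast this
  have habs : |(d:ℝ)| * H ≤ |(zdot h vj : ℝ)| * enorm2 vh + |(zdot h vh : ℝ)| * enorm2 vj := by
    calc |(d:ℝ)| * H = ‖(d:ℂ) * cz h‖ := by
          rw [norm_mul, Complex.norm_intCast, hHdef, enorm2_eq]
      _ = ‖(zdot h vj : ℂ) * (-Complex.I * cz vh) +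
            (zdot h vh : ℂ) * (Complex.I * cz vj)‖ := by rw [hcram]
      _ ≤ ‖(zdot h vj : ℂ) * (-Complex.I * cz vh)‖ +
            ‖(zdot h vh : ℂ) * (Complex.I * cz vj)‖ := norm_add_le _ _
      _ = |(zdot h vj : ℝ)| * enorm2 vh + |(zdot h vh : ℝ)| * enorm2 vj := by
          rw [norm_mul, norm_mul, norm_mul, norm_mul, Complex.norm_intCast, Complex.norm_intCast,
            enorm2_eq vh, enorm2_eq vj]
          simp
  -- conclude
  have hvjHδ : enorm2 vj ≤ H ^ δ := hvjH
  have hvhHδ : enorm2 vh ≤ H ^ δ := hmh.2.1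
  have hNμ2Hμ : N ^ μ ≤ 2 * H ^ μ := by
    have h1 : N ^ μ ≤ (2 * H) ^ μ :=
      Real.rpow_le_rpow (le_of_lt hNpos) hN2H (le_of_lt hμpos)
    have h2 : (2 * H) ^ μ ≤ 2 * H ^ μ := h2μ H hHpos
    linarith
  have hNμpos : (0:ℝ) < N ^ μ := Real.rpow_pos_of_pos hNpos μ
  have hHμpos : (0:ℝ) < H ^ μ := Real.rpow_pos_of_pos hHpos μ
  have hmain : H ≤ 16 * H ^ (1 - δ) := by
    have hstep1 : H ≤ |(d:ℝ)| * H := le_mul_of_one_le_left hHpos.le hd1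
    have hterm1 : |(zdot h vj : ℝ)| * enorm2 vh ≤ 4 * N ^ μ * H ^ δ := by
      apply mul_le_mul hA hvhHδ (enorm2_nonneg vh) (by positivity)
    have hterm2 : |(zdot h vh : ℝ)| * enorm2 vj ≤ 4 * N ^ μ * H ^ δ := by
      apply mul_le_mul (le_trans hminR hA) hvjHδ (enorm2_nonneg vj) (by positivity)
    have hcomb : H ≤ 8 * N ^ μ * H ^ δ := by linarith
    have h8 : N ^ μ * H ^ δ ≤ 2 * (H ^ μ * H ^ δ) := by
      have := mul_le_mul_of_nonneg_right hNμ2Hμ hHδpos.le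
      linarith
    have hμδ : H ^ μ * H ^ δ = H ^ (1 - δ) := by
      rw [← Real.rpow_add hHpos]
      congr 1
      rw [hμ]; ring
    rw [hμδ] at h8
    nlinarith
  have hHbig : 256 ^ (1/δ) < H := by linarith
  have hHδ : (256:ℝ) < H ^ δ := by
    have h1 : (256 ^ (1/δ) : ℝ) ^ δ < H ^ δ :=
      Real.rpow_lt_rpow (by positivity) hHbig hδ
    rwa [← Real.rpow_mul (by norm_num : (0:ℝ) ≤ 256), one_div,
      inv_mul_cancel₀ (ne_of_gt hδ), Real.rpow_one] at h1
  have hsplitH : H ^ δ * H ^ (1 - δ) = H := by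
    rw [← Real.rpow_add hHpos]
    norm_num
  have hH1δpos : (0:ℝ) < H ^ (1 - δ) := Real.rpow_pos_of_pos hHpos (1 - δ)
  have h9 : 256 * H ^ (1 - δ) ≤ H ^ δ * H ^ (1 - δ) :=
    mul_le_mul_of_nonneg_right hHδ.le hH1δpos.le
  linarith
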